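/- Let (T, r, L) be a layered tight k-tree with layering L = (L_1, …, L_m). Then |L_i| ≤ Δ_1(T)^{i−1} for all i ∈ [m]. -/

import Mathlib

open Finset

attribute [local instance] Classical.propDecidable

variable {α : Type*}

/-- The degree of a vertex `v` in a hypergraph `T`: the number of edges containing `v`. -/
def vdeg [DecidableEq α] (T : Finset (Finset α)) (v : α) : ℕ :=
  (T.filter fun e => v ∈ e).card

/-- The vertex set of a hypergraph: the union of its edges. -/
def hverts [DecidableEq α] (T : Finset (Finset α)) : Finset α := T.sup id

/-- The maximum 1-degree of a hypergraph. -/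
def hmaxDeg [DecidableEq α] (T : Finset (Finset α)) : ℕ := (hverts T).sup (vdeg T)

/-- `es` is a valid ordering of the edges of a tight `k`-tree: every edge is a `k`-set, and
every edge except the first contains a vertex `v` not in any previous edge with the rest of
the edge contained in some previous edge. -/
def ValidOrdering [DecidableEq α] (k : ℕ) (es : List (Finset α)) : Prop :=
  (∀ e ∈ es, e.card = k) ∧
  ∀ i, 0 < i → i < es.length →
    ∃ v ∈ es.getD i ∅,
      (∀ j, j < i → v ∉ es.getD j ∅) ∧
      ∃ j, j < i ∧ (es.getD i ∅) \ {v} ⊆ es.getD j ∅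

/-- `T` is a tight `k`-tree: its edges admit a valid ordering. -/
def IsTightTree [DecidableEq α] (k : ℕ) (T : Finset (Finset α)) : Prop :=
  ∃ es : List (Finset α), es ≠ [] ∧ es.Nodup ∧ es.toFinset = T ∧ ValidOrdering k es

/-- `f` belongs to the shadow of the `k`-graph `H`. -/
def InShadow [DecidableEq α] (k : ℕ) (H : Finset (Finset α)) (f : Finset α) : Prop :=
  f.card = k - 1 ∧ ∃ e ∈ H, f ⊆ e

/-- `H` contains (a copy of) `T`. -/
def Contains {β : Type*} [DecidableEq α] [DecidableEq β]
    (H : Finset (Finset α)) (T : Finset (Finset β)) : Prop :=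
  ∃ φ : β → α, Function.Injective φ ∧ ∀ e ∈ T, e.image φ ∈ H

/-- `(L 1, …, L m)` is a layering for the rooted tight `k`-tree `(T, r)`. -/
structure IsLayering [DecidableEq α] (k : ℕ) (T : Finset (Finset α)) (r : Finset α)
    (m : ℕ) (L : ℕ → Finset α) : Prop where
  /-- every layer is nonempty -/
  nonempty : ∀ i, 1 ≤ i → i ≤ m → (L i).Nonempty
  /-- every layer consists of vertices of `T` -/
  layer_subset : ∀ i, 1 ≤ i → i ≤ m → L i ⊆ hverts T
  /-- the layers are pairwise disjoint -/
  layer_disjoint : ∀ i j, 1 ≤ i → i ≤ m → 1 ≤ j → j ≤ m → i ≠ j → Disjoint (L i) (L j)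
  /-- the layers cover `V(T)` -/
  cover : ∀ v ∈ hverts T, ∃ i, 1 ≤ i ∧ i ≤ m ∧ v ∈ L i
  /-- `|r ∩ L i| = 1` for all `i ∈ [k−1]` -/
  root_inter : ∀ i, 1 ≤ i → i ≤ k - 1 → (r ∩ L i).card = 1
  /-- `|L 1| = 1` -/
  first_card : (L 1).card = 1
  /-- every vertex of `L (i+1)` shares an edge with some vertex of `L i` -/
  link : ∀ i, 1 ≤ i → i < m → ∀ v ∈ L (i + 1), ∃ w ∈ L i, ∃ e ∈ T, v ∈ e ∧ w ∈ e
  /-- every edge meets `k` consecutive layers, each exactly once -/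
  window : ∀ e ∈ T, ∃ j, 1 ≤ j ∧ j + (k - 1) ≤ m ∧ ∀ i, j ≤ i → i < j + k → (e ∩ L i).card = 1

/-- In a layered tight `k`-tree `(T, r, L)` with layering `(L 1, …, L m)`, each
layer satisfies `|L i| ≤ Δ₁(T) ^ (i − 1)`. -/
theorem layer_size_bound [DecidableEq α] (k : ℕ) (hk : 2 ≤ k)
    (T : Finset (Finset α)) (hT : IsTightTree k T)
    (r : Finset α) (hr : InShadow k T r)
    (m : ℕ) (L : ℕ → Finset α) (hL : IsLayering k T r m L) :
    ∀ i, 1 ≤ i → i ≤ m → (L i).card ≤ hmaxDeg T ^ (i - 1) := by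
  -- edges are k-sets
  obtain ⟨es, hne, hnd, hesT, hcards, -⟩ := hT
  have hcard : ∀ e ∈ T, e.card = k := by
    intro e he
    exact hcards e (by rw [← hesT] at he; exact List.mem_toFinset.mp he)
  -- each edge meets each layer in at most one vertex
  have hinter : ∀ e ∈ T, ∀ s, 1 ≤ s → s ≤ m → (e ∩ L s).card ≤ 1 := by
    intro e he s hs1 hsm
    obtain ⟨j, hj1, hjm, hw⟩ := hL.window e he
    by_cases hsW : j ≤ s ∧ s < j + k
    · exact le_of_eq (hw s hsW.1 hsW.2)
    · -- show e ∩ L s = ∅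
      have hB : (Finset.Ico j (j + k)).biUnion (fun t => e ∩ L t) = e := by
        apply Finset.eq_of_subset_of_card_le
        · intro v hv
          simp only [Finset.mem_biUnion] at hv
          obtain ⟨t, -, hv⟩ := hv
          exact (Finset.mem_inter.mp hv).1
        · rw [Finset.card_biUnion]
          · have : ∀ t ∈ Finset.Ico j (j + k), (e ∩ L t).card = 1 := by
              intro t ht
              rw [Finset.mem_Ico] at ht
              exact hw t ht.1 ht.2
            rw [Finset.sum_congr rfl this, Finset.sum_const, smul_eq_mul, mul_one,
              Nat.card_Ico, hcard e he]
            omega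
          · intro t ht t' ht' htt'
            rw [Finset.mem_coe, Finset.mem_Ico] at ht ht'
            have h1 : 1 ≤ t := le_trans hj1 ht.1
            have h2 : t ≤ m := by omega
            have h1' : 1 ≤ t' := le_trans hj1 ht'.1
            have h2' : t' ≤ m := by omega
            exact Finset.disjoint_of_subset_left Finset.inter_subset_right
              (Finset.disjoint_of_subset_right Finset.inter_subset_right
                (hL.layer_disjoint t t' h1 h2 h1' h2' htt'))
      have : e ∩ L s = ∅ := by
        rw [Finset.eq_empty_iff_forall_notMem]
        intro v hv
        rw [Finset.mem_inter] at hv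
        have hvB : v ∈ (Finset.Ico j (j + k)).biUnion (fun t => e ∩ L t) := by
          rw [hB]; exact hv.1
        simp only [Finset.mem_biUnion, Finset.mem_Ico, Finset.mem_inter] at hvB
        obtain ⟨t, ht, -, hvt⟩ := hvB
        have hts : t ≠ s := by intro h; exact hsW ⟨h ▸ ht.1, h ▸ ht.2⟩
        have := hL.layer_disjoint t s (le_trans hj1 ht.1) (by omega) hs1 hsm hts
        exact Finset.disjoint_left.mp this hvt hv.2
      simp [this]
  -- main induction
  intro i hi him
  induction i with
  | zero => omega
  | succ n ih =>
    rcases Nat.eq_zero_or_pos n with hn0 | hn1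
    · subst hn0
      simpa using le_of_eq hL.first_card
    · have hnm : n < m := by omega
      have ihn : (L n).card ≤ hmaxDeg T ^ (n - 1) := ih hn1 (by omega)
      -- crucial step: |L (n+1)| ≤ Δ * |L n|
      have hstep : (L (n + 1)).card ≤ hmaxDeg T * (L n).card := by
        rcases (L (n + 1)).eq_empty_or_nonempty with hE | ⟨v₀, hv₀⟩
        · simp [hE]
        haveI : Nonempty α := ⟨v₀⟩
        set P : α → α × Finset α → Prop :=
          fun v p => p.1 ∈ L n ∧ p.2 ∈ T ∧ v ∈ p.2 ∧ p.1 ∈ p.2 with hP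
        have hex : ∀ v ∈ L (n + 1), ∃ p, P v p := by
          intro v hv
          obtain ⟨w, hw, e, he, hve, hwe⟩ := hL.link n hn1 hnm v hv
          exact ⟨(w, e), hw, he, hve, hwe⟩
        set f : α → α × Finset α := fun v =>
          if h : ∃ p, P v p then Classical.choose h else (Classical.arbitrary α, ∅) with hf
        have hfspec : ∀ v ∈ L (n + 1), P v (f v) := by
          intro v hv
          show P v (if h : ∃ p, P v p then Classical.choose h else (Classical.arbitrary α, ∅))
          rw [dif_pos (hex v hv)]
          exact Classical.choose_spec (hex v hv)
        set S : Finset (α × Finset α) :=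
          (L n).biUnion (fun w => (T.filter fun e => w ∈ e).image (Prod.mk w)) with hS
        have hmaps : ∀ v ∈ L (n + 1), f v ∈ S := by
          intro v hv
          obtain ⟨h1, h2, h3, h4⟩ := hfspec v hv
          rw [hS]
          simp only [Finset.mem_biUnion, Finset.mem_image, Finset.mem_filter]
          exact ⟨(f v).1, h1, (f v).2, ⟨h2, h4⟩, rfl⟩
        have hinj : Set.InjOn f (L (n + 1)) := by
          intro v hv v' hv' hvv'
          rw [Finset.mem_coe] at hv hv'
          obtain ⟨-, h2, h3, -⟩ := hfspec v hv
          obtain ⟨-, h2', h3', -⟩ := hfspec v' hv'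
          rw [hvv'] at h3
          have hle := hinter (f v').2 h2' (n + 1) (by omega) (by omega)
          exact Finset.card_le_one.mp hle v (Finset.mem_inter.mpr ⟨h3, hv⟩)
            v' (Finset.mem_inter.mpr ⟨h3', hv'⟩)
        calc (L (n + 1)).card ≤ S.card := Finset.card_le_card_of_injOn f hmaps hinj
          _ ≤ ∑ w ∈ L n, ((T.filter fun e => w ∈ e).image (Prod.mk w)).card :=
              Finset.card_biUnion_le
          _ ≤ ∑ w ∈ L n, hmaxDeg T := by
              apply Finset.sum_le_sum
              intro w hw
              calc ((T.filter fun e => w ∈ e).image (Prod.mk w)).card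
                  ≤ (T.filter fun e => w ∈ e).card := Finset.card_image_le
                _ = vdeg T w := rfl
                _ ≤ hmaxDeg T := Finset.le_sup (hL.layer_subset n hn1 (by omega) hw)
          _ = hmaxDeg T * (L n).card := by rw [Finset.sum_const, smul_eq_mul, mul_comm]
      calc (L (n + 1)).card ≤ hmaxDeg T * (L n).card := hstep
        _ ≤ hmaxDeg T * hmaxDeg T ^ (n - 1) := Nat.mul_le_mul_left _ ihn
        _ = hmaxDeg T ^ (n + 1 - 1) := by
            rw [← pow_succ']
            congr 1
            omega
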